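/- If v has at least one child in T and at least two vertices of S lie outside T(v), then there exists a Hamiltonian cycle on S that conforms to T₁ but not to T; hence Λ(T) is a strict subset of Λ(T₁). -/

import Mathlib

/-- A rooted tree on a vertex type `V`, given by a parent function under which
every vertex reaches the root. -/
structure ParentTree (V : Type) where
  root : V
  parent : V → V
  parent_root : parent root = root
  reaches_root : ∀ v, ∃ k, parent^[k] v = root

namespace ParentTree

variable {V : Type}

/-- The set `C(u)` of children of `u`. -/
def children (T : ParentTree V) (u : V) : Set V := {v | T.parent v = u ∧ v ≠ u}

/-- The set `T(u)` of descendants of `u` (including `u` itself). -/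
def desc (T : ParentTree V) (u : V) : Set V := {b | ∃ k, T.parent^[k] b = u}

/-- For a set `U` of siblings, `T(U) = ⋃_{u ∈ U} T(u)`. -/
def descU (T : ParentTree V) (U : Set V) : Set V := ⋃ u ∈ U, T.desc u

end ParentTree

/-- The set of points occurring in a list. -/
def listSet {V : Type} (l : List V) : Set V := {x | x ∈ l}

/-- The weight of a Hamiltonian cycle given as a list: the sum of distances
over cyclically consecutive pairs. -/
def cycleWeight {V X : Type} [MetricSpace X] (f : V → X) (h : List V) : ℝ :=
  ((h.zip (h.rotate 1)).map fun p => dist (f p.1) (f p.2)).sum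

/-- A Hamiltonian cycle on the point set: a cyclic ordering of all points,
represented as a duplicate-free list containing every point. -/
def IsHamCycle {V : Type} (h : List V) : Prop := h.Nodup ∧ ∀ x : V, x ∈ h

/-- The set `A` forms a contiguous cyclic arc of the cycle `h`. -/
def IsCyclicArc {V : Type} (A : Set V) (h : List V) : Prop :=
  ∃ i : ℕ, listSet ((h.rotate i).take A.ncard) = A

/-- A Hamiltonian cycle conforms to the rooted tree `T` if for every node `u`
the set `T(u)` of descendants of `u` forms a contiguous cyclic arc of the cycle. -/
def CycleConforms {V : Type} (T : ParentTree V) (h : List V) : Prop :=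
  ∀ u : V, IsCyclicArc (T.desc u) h

namespace ParentTree
variable {V : Type}
variable (T : ParentTree V)

lemma desc_self (w : V) : w ∈ T.desc w := ⟨0, rfl⟩

lemma iterate_root (j : ℕ) : T.parent^[j] T.root = T.root := by
  induction j with
  | zero => rfl
  | succ n ih => rw [Function.iterate_succ_apply', ih, T.parent_root]

lemma root_of_periodic {w : V} {k : ℕ} (hk : k ≠ 0) (h : T.parent^[k] w = w) :
    w = T.root := by
  obtain ⟨m, hm⟩ := T.reaches_root w
  have hmul : ∀ t : ℕ, T.parent^[k * t] w = w := by
    intro t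
    induction t with
    | zero => rfl
    | succ n ih => rw [Nat.mul_succ, Function.iterate_add_apply, h, ih]
  have h1 : T.parent^[k * (m + 1)] w = w := hmul (m + 1)
  have h2 : k * (m + 1) = (k * (m + 1) - m) + m := by
    have : m ≤ k * (m + 1) := by nlinarith [Nat.one_le_iff_ne_zero.2 hk]
    omega
  rw [h2, Function.iterate_add_apply, hm, iterate_root] at h1
  exact h1.symm

lemma root_of_parent_eq {w : V} (h : T.parent w = w) : w = T.root :=
  T.root_of_periodic one_ne_zero h

lemma desc_child_subset {c w : V} (h : c ∈ T.children w) : T.desc c ⊆ T.desc w := by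
  rintro x ⟨k, hk⟩
  exact ⟨k + 1, by rw [Function.iterate_succ_apply', hk, h.1]⟩

lemma not_mem_desc_child {c w : V} (h : c ∈ T.children w) : w ∉ T.desc c := by
  rintro ⟨k, hk⟩
  have : T.parent^[k + 1] w = w := by
    rw [Function.iterate_succ_apply', hk, h.1]
  have hw : w = T.root := T.root_of_periodic (Nat.succ_ne_zero k) this
  rw [hw, iterate_root] at hk
  exact h.2 (hk.symm ▸ hw ▸ rfl)

lemma desc_decomp (w : V) :
    T.desc w = {w} ∪ ⋃ c ∈ T.children w, T.desc c := by
  ext x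
  constructor
  · rintro ⟨k, hk⟩
    induction k generalizing x with
    | zero => exact Or.inl hk
    | succ n ih =>
      rw [Function.iterate_succ_apply'] at hk
      set m := T.parent^[n] x with hm
      by_cases hmw : m = w
      · exact ih x hmw
      · refine Or.inr ?_
        simp only [Set.mem_iUnion]
        exact ⟨m, ⟨hk, hmw⟩, ⟨n, rfl⟩⟩
  · rintro (hx | hx)
    · exact hx ▸ T.desc_self w
    · simp only [Set.mem_iUnion] at hx
      obtain ⟨c, hc, hxc⟩ := hx
      exact T.desc_child_subset hc hxc

lemma desc_disjoint_aux {c₁ c₂ w x : V} (h₁ : c₁ ∈ T.children w) (h₂ : c₂ ∈ T.children w)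
    {k₁ k₂ : ℕ} (hk : k₁ ≤ k₂) (e₁ : T.parent^[k₁] x = c₁) (e₂ : T.parent^[k₂] x = c₂) :
    c₁ = c₂ := by
  have key : T.parent^[k₂ - k₁] c₁ = c₂ := by
    rw [← e₁, ← Function.iterate_add_apply, Nat.sub_add_cancel hk, e₂]
  rcases Nat.eq_zero_or_pos (k₂ - k₁) with h0 | h0
  · rw [h0] at key; exact key
  · exfalso
    obtain ⟨e, he⟩ : ∃ e, k₂ - k₁ = e + 1 := ⟨k₂ - k₁ - 1, by omega⟩
    rw [he, Function.iterate_succ_apply, h₁.1] at key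
    have hper : T.parent^[e + 1] w = w := by
      rw [Function.iterate_succ_apply', key, h₂.1]
    have hw : w = T.root := T.root_of_periodic (Nat.succ_ne_zero e) hper
    rw [hw, iterate_root] at key
    exact h₂.2 (key ▸ hw ▸ rfl)

lemma desc_disjoint {c₁ c₂ w : V} (h₁ : c₁ ∈ T.children w) (h₂ : c₂ ∈ T.children w)
    (hne : c₁ ≠ c₂) : T.desc c₁ ∩ T.desc c₂ = ∅ := by
  ext x
  simp only [Set.mem_inter_iff, Set.mem_empty_iff_false, iff_false, not_and]
  rintro ⟨k₁, e₁⟩ ⟨k₂, e₂⟩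
  rcases le_total k₁ k₂ with h | h
  · exact hne (T.desc_disjoint_aux h₁ h₂ h e₁ e₂)
  · exact hne (T.desc_disjoint_aux h₂ h₁ h e₂ e₁).symm

lemma ncard_desc_lt [Fintype V] {c w : V} (h : c ∈ T.children w) :
    (T.desc c).ncard < (T.desc w).ncard := by
  apply Set.ncard_lt_ncard _ (Set.toFinite _)
  exact ⟨T.desc_child_subset h, fun hsub => T.not_mem_desc_child h (hsub (T.desc_self w))⟩

lemma desc_root_eq_univ : T.desc T.root = Set.univ := by
  ext x; simpa [desc] using T.reaches_root x

end ParentTree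

section DFS

variable {V : Type} [Fintype V]

open Classical in
/-- "former children of v" kids of w -/
noncomputable def kids1 (T T₁ : ParentTree V) (v w : V) : List V :=
  ((Set.toFinite {c | T₁.parent c = w ∧ c ≠ w ∧ c ≠ v ∧ T.parent c = v}).toFinset).toList

open Classical in
noncomputable def kids2 (T T₁ : ParentTree V) (v w : V) : List V :=
  ((Set.toFinite {c | T₁.parent c = w ∧ c ≠ w ∧ c ≠ v ∧ T.parent c ≠ v}).toFinset).toList

open Classical in
noncomputable def kidsF (T T₁ : ParentTree V) (v w : V) : List V :=
  kids1 T T₁ v w ++ kids2 T T₁ v w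

lemma mem_kids1 {T T₁ : ParentTree V} {v w c : V} :
    c ∈ kids1 T T₁ v w ↔ (T₁.parent c = w ∧ c ≠ w ∧ c ≠ v ∧ T.parent c = v) := by
  simp [kids1]

lemma mem_kids2 {T T₁ : ParentTree V} {v w c : V} :
    c ∈ kids2 T T₁ v w ↔ (T₁.parent c = w ∧ c ≠ w ∧ c ≠ v ∧ T.parent c ≠ v) := by
  simp [kids2]

lemma mem_kidsF {T T₁ : ParentTree V} {v w c : V} :
    c ∈ kidsF T T₁ v w ↔ (T₁.parent c = w ∧ c ≠ w ∧ c ≠ v) := by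
  simp only [kidsF, List.mem_append, mem_kids1, mem_kids2]
  by_cases h : T.parent c = v <;> tauto

lemma kidsF_nodup (T T₁ : ParentTree V) (v w : V) : (kidsF T T₁ v w).Nodup := by
  refine List.Nodup.append (Finset.nodup_toList _) (Finset.nodup_toList _) ?_
  intro c h1 h2
  rw [mem_kids1] at h1; rw [mem_kids2] at h2
  exact h2.2.2.2 h1.2.2.2

lemma kidsF_child {T T₁ : ParentTree V} {v w c : V} (h : c ∈ kidsF T T₁ v w) :
    c ∈ T₁.children w := by
  rw [mem_kidsF] at h; exact ⟨h.1, h.2.1⟩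

open Classical in
noncomputable def dfs (T T₁ : ParentTree V) (u v : V) (w : V) : List V :=
  (if w = u then [v, u] else [w]) ++
    ((kidsF T T₁ v w).attach.map (fun c => dfs T T₁ u v c.1)).flatten
termination_by (T₁.desc w).ncard
decreasing_by exact T₁.ncard_desc_lt (kidsF_child c.2)

open Classical in
lemma dfs_eq (T T₁ : ParentTree V) (u v w : V) :
    dfs T T₁ u v w = (if w = u then [v, u] else [w]) ++
      ((kidsF T T₁ v w).map (dfs T T₁ u v)).flatten := by
  rw [dfs]
  congr 2
  exact List.attach_map_val

end DFS

section Spec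

variable {V : Type} [Fintype V] {T T₁ : ParentTree V} {u v : V}

lemma listSet_length {l : List V} (h : l.Nodup) : (listSet l).ncard = l.length := by
  classical
  have e : listSet l = ↑l.toFinset := by ext x; simp [listSet]
  rw [e, Set.ncard_coe_finset, List.toFinset_card_of_nodup h]

omit [Fintype V] in
lemma desc_v_singleton (hleaf : ∀ c, T₁.parent c = v → c = v) : T₁.desc v = {v} := by
  ext x
  simp only [Set.mem_singleton_iff, ParentTree.desc, Set.mem_setOf_eq]
  constructor
  · rintro ⟨k, hk⟩
    induction k generalizing x with
    | zero => exact hk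
    | succ n ihn =>
      rw [Function.iterate_succ_apply'] at hk
      exact ihn x (hleaf _ hk)
  · rintro rfl; exact ⟨0, rfl⟩

lemma children_eq_kids (hvchild : T₁.parent v = u) {w : V} (hw : w ≠ u) :
    T₁.children w = {c | c ∈ kidsF T T₁ v w} := by
  ext c
  simp only [ParentTree.children, Set.mem_setOf_eq, mem_kidsF]
  refine ⟨fun h => ⟨h.1, h.2, ?_⟩, fun h => ⟨h.1, h.2.1⟩⟩
  rintro rfl
  exact hw (by rw [← h.1, hvchild])

lemma children_u_eq_kids (hvu : v ≠ u) (hvchild : T₁.parent v = u) :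
    T₁.children u = {v} ∪ {c | c ∈ kidsF T T₁ v u} := by
  ext c
  simp only [ParentTree.children, Set.mem_setOf_eq, mem_kidsF, Set.mem_union,
    Set.mem_singleton_iff]
  constructor
  · intro h
    by_cases hcv : c = v
    · exact Or.inl hcv
    · exact Or.inr ⟨h.1, h.2, hcv⟩
  · rintro (rfl | h)
    · exact ⟨hvchild, hvu⟩
    · exact ⟨h.1, h.2.1⟩

lemma dfs_spec (hvu : v ≠ u) (hvchild : T₁.parent v = u)
    (hleaf : ∀ c, T₁.parent c = v → c = v) (w : V) :
    listSet (dfs T T₁ u v w) = T₁.desc w ∧ (dfs T T₁ u v w).Nodup := by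
  have main : ∀ n (w : V), (T₁.desc w).ncard = n →
      listSet (dfs T T₁ u v w) = T₁.desc w ∧ (dfs T T₁ u v w).Nodup := by
    intro n
    induction n using Nat.strong_induction_on with
    | _ n ih =>
      intro w hn
      have ihc : ∀ c ∈ kidsF T T₁ v w,
          listSet (dfs T T₁ u v c) = T₁.desc c ∧ (dfs T T₁ u v c).Nodup := fun c hc =>
        ih _ (hn ▸ T₁.ncard_desc_lt (kidsF_child hc)) c rfl
      have memc : ∀ c ∈ kidsF T T₁ v w, ∀ x, x ∈ dfs T T₁ u v c ↔ x ∈ T₁.desc c := by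
        intro c hc x
        rw [← (ihc c hc).1]; rfl
      constructor
      · -- listSet
        rw [dfs_eq]
        ext x
        simp only [listSet, Set.mem_setOf_eq, List.mem_append, List.mem_flatten,
          List.mem_map]
        have hx : (∃ l, (∃ c ∈ kidsF T T₁ v w, dfs T T₁ u v c = l) ∧ x ∈ l) ↔
            (∃ c ∈ kidsF T T₁ v w, x ∈ T₁.desc c) := by
          constructor
          · rintro ⟨l, ⟨c, hc, rfl⟩, hxl⟩
            exact ⟨c, hc, (memc c hc x).1 hxl⟩
          · rintro ⟨c, hc, hxc⟩
            exact ⟨dfs T T₁ u v c, ⟨c, hc, rfl⟩, (memc c hc x).2 hxc⟩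
        rw [hx]
        rw [show T₁.desc w = {w} ∪ ⋃ c ∈ T₁.children w, T₁.desc c from T₁.desc_decomp w]
        by_cases hwu : w = u
        · rw [if_pos hwu]
          have hch : T₁.children w = {v} ∪ {c | c ∈ kidsF T T₁ v w} := by
            rw [hwu]; exact children_u_eq_kids (T:=T) hvu hvchild
          rw [hch]
          simp only [List.mem_cons, List.not_mem_nil, or_false, Set.mem_union,
            Set.mem_singleton_iff, Set.mem_iUnion, exists_prop, Set.mem_setOf_eq]
          constructor
          · rintro ((h1 | h1) | ⟨c, hc, hxc⟩)
            · exact Or.inr ⟨v, Or.inl rfl, by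
                rw [desc_v_singleton hleaf]; exact h1⟩
            · exact Or.inl (h1.trans hwu.symm)
            · exact Or.inr ⟨c, Or.inr hc, hxc⟩
          · rintro (h1 | ⟨c, hc2, hxc⟩)
            · exact Or.inl (Or.inr (h1.trans hwu))
            · rcases hc2 with hc2 | hc2
              · rw [hc2, desc_v_singleton hleaf] at hxc
                exact Or.inl (Or.inl hxc)
              · exact Or.inr ⟨c, hc2, hxc⟩
        · rw [if_neg hwu, children_eq_kids (T:=T) hvchild hwu]
          simp only [List.mem_cons, List.not_mem_nil, or_false, Set.mem_union,
            Set.mem_singleton_iff, Set.mem_iUnion, exists_prop, Set.mem_setOf_eq]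
      · -- Nodup
        rw [dfs_eq]
        have hflat : (((kidsF T T₁ v w).map (dfs T T₁ u v)).flatten).Nodup := by
          rw [List.nodup_flatten]
          constructor
          · rintro l hl
            rw [List.mem_map] at hl
            obtain ⟨c, hc, rfl⟩ := hl
            exact (ihc c hc).2
          · rw [List.pairwise_map]
            refine List.Pairwise.imp_of_mem ?_
              (List.Pairwise.and_mem.1 ((kidsF_nodup T T₁ v w).imp_of_mem (fun _ _ h => h)))
            rintro c c' hc hc' ⟨hcm, hcm', hne⟩ x hxc hxc'
            have h1 : x ∈ T₁.desc c := (memc c hcm x).1 hxc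
            have h2 : x ∈ T₁.desc c' := (memc c' hcm' x).1 hxc'
            have hd := T₁.desc_disjoint (kidsF_child hcm) (kidsF_child hcm') hne
            exact absurd (Set.mem_inter h1 h2) (by rw [hd]; exact Set.notMem_empty x)
        rw [List.nodup_append']
        refine ⟨?_, hflat, ?_⟩
        · by_cases hwu : w = u
          · rw [if_pos hwu]; simp [hvu]
          · rw [if_neg hwu]; simp
        · intro x hxh hxf
          rw [List.mem_flatten] at hxf
          obtain ⟨l, hl, hxl⟩ := hxf
          rw [List.mem_map] at hl
          obtain ⟨c, hc, rfl⟩ := hl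
          have hxc : x ∈ T₁.desc c := (memc c hc x).1 hxl
          by_cases hwu : w = u
          · rw [if_pos hwu] at hxh
            simp only [List.mem_cons, List.not_mem_nil, or_false] at hxh
            rcases hxh with hxv | hxu
            · -- x = v
              have hvw : v ∈ T₁.children w := by rw [hwu]; exact ⟨hvchild, hvu⟩
              have hdisj := T₁.desc_disjoint (kidsF_child hc) hvw (mem_kidsF.1 hc).2.2
              have hv : x ∈ T₁.desc v := by rw [hxv]; exact T₁.desc_self v
              exact absurd (Set.mem_inter hxc hv) (by rw [hdisj]; exact Set.notMem_empty x)
            · -- x = u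
              have : w ∈ T₁.desc c := by rw [hwu, ← hxu]; exact hxc
              exact T₁.not_mem_desc_child (kidsF_child hc) this
          · rw [if_neg hwu] at hxh
            simp only [List.mem_cons, List.not_mem_nil, or_false] at hxh
            have : w ∈ T₁.desc c := by rw [← hxh]; exact hxc
            exact T₁.not_mem_desc_child (kidsF_child hc) this
  exact main _ w rfl

end Spec

section Infix

variable {V : Type} [Fintype V] {T T₁ : ParentTree V} {u v : V}
set_option linter.unusedSectionVars false

lemma kidsF_v_nil (T : ParentTree V) (hleaf : ∀ c, T₁.parent c = v → c = v) : kidsF T T₁ v v = [] := by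
  rw [List.eq_nil_iff_forall_not_mem]
  intro c hc
  rw [mem_kidsF] at hc
  exact hc.2.2 (hleaf c hc.1)

lemma dfs_v_eq (hvu : v ≠ u) (hleaf : ∀ c, T₁.parent c = v → c = v) :
    dfs T T₁ u v v = [v] := by
  rw [dfs_eq, if_neg hvu, kidsF_v_nil T hleaf]
  simp

lemma infix_append_left {l l₂ : List V} (l₁ : List V) (h : l <:+: l₂) : l <:+: l₁ ++ l₂ := by
  obtain ⟨s, t, rfl⟩ := h
  exact ⟨l₁ ++ s, t, by simp⟩

lemma dfs_infix (hvu : v ≠ u) (hvchild : T₁.parent v = u)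
    (hleaf : ∀ c, T₁.parent c = v → c = v) (w : V) :
    dfs T T₁ u v w <:+: dfs T T₁ u v T₁.root := by
  have main : ∀ k (w : V), T₁.parent^[k] w = T₁.root →
      dfs T T₁ u v w <:+: dfs T T₁ u v T₁.root := by
    intro k
    induction k with
    | zero => intro w hw; rw [show w = T₁.root from hw]
    | succ k ih =>
      intro w hw
      by_cases hwr : w = T₁.root
      · rw [hwr]
      · have hpw : T₁.parent^[k] (T₁.parent w) = T₁.root := by
          rw [← Function.iterate_succ_apply]; exact hw
        have hpi := ih (T₁.parent w) hpw
        by_cases hwv : w = v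
        · -- w = v : [v] is a prefix of dfs u
          have h1 : dfs T T₁ u v v <:+: dfs T T₁ u v u := by
            rw [dfs_v_eq hvu hleaf, dfs_eq, if_pos rfl]
            exact ⟨[], [u] ++ ((kidsF T T₁ v u).map (dfs T T₁ u v)).flatten, by simp⟩
          have hpu : T₁.parent w = u := by rw [hwv, hvchild]
          rw [hpu] at hpi
          rw [hwv]
          exact h1.trans hpi
        · have hwp : w ≠ T₁.parent w := by
            intro hcon
            exact hwr (T₁.root_of_parent_eq hcon.symm)
          have hmem : w ∈ kidsF T T₁ v (T₁.parent w) := by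
            rw [mem_kidsF]
            exact ⟨rfl, fun h => hwp h, hwv⟩
          have h1 : dfs T T₁ u v w <:+: dfs T T₁ u v (T₁.parent w) := by
            rw [dfs_eq (w := T₁.parent w)]
            refine infix_append_left _ (List.infix_of_mem_flatten ?_)
            exact List.mem_map_of_mem hmem
          exact h1.trans hpi
  obtain ⟨k, hk⟩ := T₁.reaches_root w
  exact main k w hk

lemma dfs_isCyclicArc (hvu : v ≠ u) (hvchild : T₁.parent v = u)
    (hleaf : ∀ c, T₁.parent c = v → c = v) {A : Set V} {l : List V}
    (hset : listSet l = A) (hnd : l.Nodup)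
    (hinf : l <:+: dfs T T₁ u v T₁.root) :
    IsCyclicArc A (dfs T T₁ u v T₁.root) := by
  obtain ⟨s, t, hst⟩ := hinf
  refine ⟨s.length, ?_⟩
  have hcard : A.ncard = l.length := by rw [← hset, listSet_length hnd]
  rw [hcard, ← hst, List.append_assoc,
    List.rotate_eq_drop_append_take (by simp : s.length ≤ (s ++ (l ++ t)).length),
    List.drop_left, List.take_left, List.append_assoc, List.take_left]
  exact hset

lemma dfs_conforms (hvu : v ≠ u) (hvchild : T₁.parent v = u)
    (hleaf : ∀ c, T₁.parent c = v → c = v) :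
    CycleConforms T₁ (dfs T T₁ u v T₁.root) := by
  intro w
  exact dfs_isCyclicArc hvu hvchild hleaf (dfs_spec hvu hvchild hleaf w).1
    (dfs_spec hvu hvchild hleaf w).2 (dfs_infix hvu hvchild hleaf w)

lemma dfs_ham (hvu : v ≠ u) (hvchild : T₁.parent v = u)
    (hleaf : ∀ c, T₁.parent c = v → c = v) :
    IsHamCycle (dfs T T₁ u v T₁.root) := by
  refine ⟨(dfs_spec hvu hvchild hleaf T₁.root).2, fun x => ?_⟩
  have h2 : listSet (dfs T T₁ u v T₁.root) = Set.univ := by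
    rw [(dfs_spec hvu hvchild hleaf T₁.root).1, T₁.desc_root_eq_univ]
  have hx : x ∈ listSet (dfs T T₁ u v T₁.root) := by rw [h2]; trivial
  exact hx

end Infix

section Final

variable {V : Type} [Fintype V]
set_option linter.unusedSectionVars false

omit [Fintype V] in
lemma desc_convert {T T₁ : ParentTree V} {u v : V}
    (hvu : v ≠ u) (hTvu : T.parent v = u) (hvroot : v ≠ T.root) (hvroot1 : v ≠ T₁.root)
    (hpar : ∀ w : V, (T.parent w = v → T₁.parent w = u) ∧
      (T.parent w ≠ v → T₁.parent w = T.parent w))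
    {c : V} (hc : T.parent c = v) (hcv : c ≠ v) :
    T₁.desc c = T.desc c := by
  have key1 : ∀ k (x : V), T.parent^[k] x = c → T₁.parent^[k] x = c := by
    intro k
    induction k with
    | zero => intro x hk; exact hk
    | succ k ih =>
      intro x hk
      rw [Function.iterate_succ_apply] at hk ⊢
      by_cases hxv : T.parent x = v
      · exfalso
        rw [hxv] at hk
        have hper : T.parent^[k + 1] c = c := by
          rw [Function.iterate_succ_apply, hc, hk]
        have hcr := T.root_of_periodic (Nat.succ_ne_zero k) hper
        have hpc : T.parent c = c := by rw [hcr, T.parent_root]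
        rw [hpc] at hc
        exact hcv hc
      · rw [(hpar x).2 hxv]
        exact ih _ hk
  have key2 : ∀ k (x : V), T₁.parent^[k] x = c → T.parent^[k] x = c := by
    intro k
    induction k with
    | zero => intro x hk; exact hk
    | succ k ih =>
      intro x hk
      rw [Function.iterate_succ_apply] at hk ⊢
      by_cases hxv : T.parent x = v
      · exfalso
        rw [(hpar x).1 hxv] at hk
        have hc1 : T₁.parent c = u := (hpar c).1 hc
        have hper : T₁.parent^[k + 1] c = c := by
          rw [Function.iterate_succ_apply, hc1, hk]
        have hcr := T₁.root_of_periodic (Nat.succ_ne_zero k) hper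
        have hcu : u = c := by rw [← hc1, hcr, T₁.parent_root]
        have hTper : T.parent^[2] v = v := by
          show T.parent (T.parent v) = v
          rw [hTvu, hcu]
          exact hc
        exact hvroot (T.root_of_periodic two_ne_zero hTper)
      · rw [(hpar x).2 hxv] at hk
        exact ih _ hk
  ext x
  simp only [ParentTree.desc, Set.mem_setOf_eq]
  exact ⟨fun ⟨k, hk⟩ => ⟨k, key2 k x hk⟩, fun ⟨k, hk⟩ => ⟨k, key1 k x hk⟩⟩

lemma dfs_ne_nil {T T₁ : ParentTree V} {u v w : V} : dfs T T₁ u v w ≠ [] := by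
  rw [dfs_eq]
  by_cases h : w = u
  · rw [if_pos h]; simp
  · rw [if_neg h]; simp

omit [Fintype V] in
lemma flatten_getLast? (ls : List (List V)) (h1 : ∀ l ∈ ls, l ≠ []) (h2 : ls ≠ []) :
    ls.flatten.getLast? = (ls.getLast h2).getLast? := by
  induction ls with
  | nil => exact absurd rfl h2
  | cons l rest ih =>
    cases rest with
    | nil => simp
    | cons l' rest' =>
      have hne : (l' :: rest').flatten ≠ [] := by
        rw [List.flatten_cons]
        simp only [ne_eq, List.append_eq_nil_iff, not_and]
        intro hl'
        exact absurd hl' (h1 l' (by simp))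
      rw [List.flatten_cons, List.getLast?_append_of_ne_nil _ hne,
        ih (fun x hx => h1 x (List.mem_cons_of_mem _ hx)) (by simp)]
      congr 1

end Final

section Main

lemma mod_pred_helper {N x y : ℕ} (hN : 0 < N) (h : (x + 1) % N = y % N) :
    x % N = (y + (N - 1)) % N := by
  have h1 : x % N = (x + N) % N := (Nat.add_mod_right x N).symm
  have h2 : x + N = (x + 1) + (N - 1) := by omega
  rw [h1, h2, Nat.add_mod, h, ← Nat.add_mod]

theorem stmt9' {V X : Type} [Fintype V] [MetricSpace X]
    (hn : 3 ≤ Fintype.card V) (f : V → X) (hf : Function.Injective f)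
    (T T₁ : ParentTree V) (u v : V) (hv : v ∈ T.children u)
    (hroot : T₁.root = T.root)
    (hpar : ∀ w : V, (T.parent w = v → T₁.parent w = u) ∧
      (T.parent w ≠ v → T₁.parent w = T.parent w))
    (hchild : (T.children v).Nonempty)
    (houtside : 2 ≤ (Set.univ \ T.desc v).ncard) :
    ∃ h : List V, IsHamCycle h ∧ CycleConforms T₁ h ∧ ¬ CycleConforms T h := by
  classical
  have hTvu : T.parent v = u := hv.1
  have hvu : v ≠ u := hv.2
  have hvchild : T₁.parent v = u := by
    rw [(hpar v).2 (by rw [hTvu]; exact Ne.symm hvu), hTvu]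
  have hleaf : ∀ c, T₁.parent c = v → c = v := by
    intro c hc
    by_cases hcx : T.parent c = v
    · exact absurd (((hpar c).1 hcx).symm.trans hc) (Ne.symm hvu)
    · exact absurd (((hpar c).2 hcx).symm.trans hc) hcx
  have hvrootT : v ≠ T.root := by
    intro hvr
    have h1 : u = T.root := by rw [← hTvu, hvr, T.parent_root]
    exact hvu (hvr.trans h1.symm)
  have hvrootT1 : v ≠ T₁.root := by rw [hroot]; exact hvrootT
  have huA : u ∉ T.desc v := by
    rintro ⟨k, hk⟩
    have hper : T.parent^[k + 1] v = v := by
      rw [Function.iterate_succ_apply, hTvu, hk]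
    exact hvrootT (T.root_of_periodic (Nat.succ_ne_zero k) hper)
  have childu : ∀ c, T.parent c = v → c ≠ v → c ∈ T₁.children u := by
    intro c hc hcv
    refine ⟨(hpar c).1 hc, ?_⟩
    intro hcu
    apply hvrootT
    apply T.root_of_periodic two_ne_zero
    show T.parent (T.parent v) = v
    rw [hTvu, ← hcu]
    exact hc
  have hAsub : T.desc v ⊆ T₁.desc u := by
    intro x hx
    rw [T.desc_decomp v] at hx
    rcases hx with hx | hx
    · have hvm : v ∈ T₁.desc u := ⟨1, by rw [Function.iterate_one]; exact hvchild⟩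
      rw [Set.mem_singleton_iff] at hx
      rw [hx]; exact hvm
    · simp only [Set.mem_iUnion, exists_prop] at hx
      obtain ⟨c, hcch, hxc⟩ := hx
      have hconv := desc_convert hvu hTvu hvrootT hvrootT1 hpar hcch.1 hcch.2
      rw [← hconv] at hxc
      exact T₁.desc_child_subset (childu c hcch.1 hcch.2) hxc
  have hsplitA : ∀ x ∈ T.desc v, x ≠ v → ∃ c, T.parent c = v ∧ c ≠ v ∧ x ∈ T₁.desc c := by
    intro x hx hxv
    rw [T.desc_decomp v] at hx
    rcases hx with hx | hx
    · exact absurd (Set.mem_singleton_iff.1 hx) hxv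
    · simp only [Set.mem_iUnion, exists_prop] at hx
      obtain ⟨c, hcch, hxc⟩ := hx
      have hconv := desc_convert hvu hTvu hvrootT hvrootT1 hpar hcch.1 hcch.2
      rw [← hconv] at hxc
      exact ⟨c, hcch.1, hcch.2, hxc⟩
  have hbackA : ∀ c, T.parent c = v → c ≠ v → T₁.desc c ⊆ T.desc v := by
    intro c hc hcv
    rw [desc_convert hvu hTvu hvrootT hvrootT1 hpar hc hcv]
    exact T.desc_child_subset ⟨hc, hcv⟩
  have hA2 : 2 ≤ (T.desc v).ncard := by
    obtain ⟨c₀, hc₀⟩ := hchild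
    have hsub2 : ({v, c₀} : Set V) ⊆ T.desc v := by
      rintro x hx
      rcases hx with hx | hx
      · rw [hx]; exact T.desc_self v
      · rw [hx]; exact T.desc_child_subset hc₀ (T.desc_self c₀)
    calc 2 = ({v, c₀} : Set V).ncard := (Set.ncard_pair (Ne.symm hc₀.2)).symm
      _ ≤ _ := Set.ncard_le_ncard hsub2 (Set.toFinite _)
  -- the cycle
  set hcyc : List V := dfs T T₁ u v T₁.root with hcyc_def
  have hham : IsHamCycle hcyc := dfs_ham (T := T) hvu hvchild hleaf
  have hconf1 : CycleConforms T₁ hcyc := dfs_conforms (T := T) hvu hvchild hleaf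
  have hnd : hcyc.Nodup := hham.1
  have hlen : hcyc.length = Fintype.card V := by
    have hl := listSet_length hnd
    rw [hcyc_def] at hl ⊢
    rw [(dfs_spec hvu hvchild hleaf T₁.root).1, T₁.desc_root_eq_univ,
      Set.ncard_univ, Nat.card_eq_fintype_card] at hl
    exact hl.symm
  have hmem_dfsu : ∀ x, x ∈ T.desc v → x ∈ dfs T T₁ u v u := by
    intro x hx
    have h1 : x ∈ T₁.desc u := hAsub hx
    have h3 : x ∈ listSet (dfs T T₁ u v u) := by
      rw [(dfs_spec hvu hvchild hleaf u).1]; exact h1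
    exact h3
  obtain ⟨a, b, hab⟩ := dfs_infix (T := T) hvu hvchild hleaf u
  rw [← hcyc_def] at hab
  set ks : List V := kidsF T T₁ v u with ks_def
  set J : List V := (ks.map (dfs T T₁ u v)).flatten with J_def
  have hdfsu : dfs T T₁ u v u = v :: u :: J := by
    rw [dfs_eq, if_pos rfl]; rfl
  have h2 : hcyc = a ++ (v :: u :: (J ++ b)) := by
    rw [← hab, hdfsu, List.append_assoc]; rfl
  set N : ℕ := hcyc.length with N_def
  set pv : ℕ := a.length with pv_def
  have hN3 : 3 ≤ N := by rw [hlen]; exact hn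
  have hNlen : N = pv + 2 + (J ++ b).length := by
    rw [N_def, h2]
    simp only [List.length_append, List.length_cons]
    omega
  have hpv1 : pv + 1 < N := by omega
  have hv_at : hcyc[pv]? = some v := by
    rw [h2, List.getElem?_append_right (by omega : a.length ≤ pv),
      show pv - a.length = 0 from by omega]
    simp
  have hu_at : hcyc[pv + 1]? = some u := by
    rw [h2, List.getElem?_append_right (by omega : a.length ≤ pv + 1),
      show pv + 1 - a.length = 1 from by omega]
    simp
  set pL : ℕ := (pv + (N - 1)) % N with pL_def
  have hpLlt : pL < N := Nat.mod_lt _ (by omega)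
  have hL_notA : ∀ x, hcyc[pL]? = some x → x ∈ T.desc v → False := by
    intro x hx hxA
    have hxu : x ∈ dfs T T₁ u v u := hmem_dfsu x hxA
    by_cases hpv0 : pv = 0
    · have ha : a = [] := List.length_eq_zero_iff.1 (by omega)
      have hXb : hcyc = dfs T T₁ u v u ++ b := by rw [← hab, ha]; rfl
      have hpL : pL = N - 1 := by
        rw [pL_def, hpv0, Nat.zero_add, Nat.mod_eq_of_lt (by omega)]
      have hlast : hcyc.getLast? = some x := by
        rw [List.getLast?_eq_getElem?, ← N_def, ← hpL]
        exact hx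
      by_cases hb : b = []
      · -- hcyc = dfs u : the S₂ emptiness argument
        have hcyc_eq : hcyc = dfs T T₁ u v u := by rw [hXb, hb]; simp
        have hJne : J ≠ [] := by
          intro hJ0
          have h22 : hcyc.length = 2 := by rw [hcyc_eq, hdfsu, hJ0]; rfl
          omega
        have hksne : ks ≠ [] := by
          intro h0; apply hJne; rw [J_def, h0]; rfl
        have hallne : ∀ l ∈ ks.map (dfs T T₁ u v), l ≠ [] := by
          intro l hl
          rw [List.mem_map] at hl
          obtain ⟨c, _, rfl⟩ := hl
          exact dfs_ne_nil
        have hmapne : ks.map (dfs T T₁ u v) ≠ [] := by simp [hksne]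
        set klast : V := ks.getLast hksne with klast_def
        have hklast_mem : klast ∈ kidsF T T₁ v u := by
          rw [← ks_def]; exact List.getLast_mem hksne
        have hklast_kid := mem_kidsF.1 hklast_mem
        have hJlast : J.getLast? = (dfs T T₁ u v klast).getLast? := by
          rw [J_def, flatten_getLast? _ hallne hmapne]
          congr 1
          have e1 := List.getLast?_eq_getLast hmapne
          rw [List.getLast?_map, List.getLast?_eq_getLast hksne, Option.map_some] at e1
          rw [klast_def]
          exact (Option.some.inj e1).symm
        have hlastJ : hcyc.getLast? = J.getLast? := by
          rw [hcyc_eq, hdfsu,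
            show (v :: u :: J) = [v, u] ++ J from rfl,
            List.getLast?_append_of_ne_nil _ hJne]
        have hxklast : x ∈ dfs T T₁ u v klast := by
          have e4 : (dfs T T₁ u v klast).getLast? = some x := by
            rw [← hJlast, ← hlastJ]; exact hlast
          have e3 := List.getLast?_eq_getLast (l := dfs T T₁ u v klast) dfs_ne_nil
          rw [e3] at e4
          rw [← Option.some.inj e4]
          exact List.getLast_mem _
        have hLdesc : x ∈ T₁.desc klast := by
          have e5 : x ∈ listSet (dfs T T₁ u v klast) := hxklast
          rw [(dfs_spec hvu hvchild hleaf klast).1] at e5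
          exact e5
        have hklast_child : klast ∈ T₁.children u := ⟨hklast_kid.1, hklast_kid.2.1⟩
        have hLne_v : x ≠ v := by
          intro hLv
          have hvd : v ∈ T₁.desc klast := hLv ▸ hLdesc
          have hd := T₁.desc_disjoint (⟨hvchild, hvu⟩ : v ∈ T₁.children u)
            hklast_child (Ne.symm hklast_kid.2.2)
          exact absurd (Set.mem_inter (T₁.desc_self v) hvd)
            (by rw [hd]; exact Set.notMem_empty v)
        obtain ⟨c, hc1, hc2, hLc⟩ := hsplitA _ hxA hLne_v
        have hcchild : c ∈ T₁.children u := childu c hc1 hc2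
        have hceq : c = klast := by
          by_contra hne
          have hd := T₁.desc_disjoint hcchild hklast_child hne
          exact absurd (Set.mem_inter hLc hLdesc) (by rw [hd]; exact Set.notMem_empty _)
        have hklastv : T.parent klast = v := by rw [← hceq]; exact hc1
        have hkids2 : kids2 T T₁ v u = [] := by
          by_contra hk2
          have g1 : ks.getLast? = some klast := by
            rw [klast_def]; exact List.getLast?_eq_getLast hksne
          have g2 : ks.getLast? = (kids2 T T₁ v u).getLast? := by
            rw [ks_def]
            exact List.getLast?_append_of_ne_nil _ hk2
          have g3 : klast = (kids2 T T₁ v u).getLast hk2 := by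
            have := g1.symm.trans g2
            rw [List.getLast?_eq_getLast hk2] at this
            exact Option.some.inj this
          have hmem2 : klast ∈ kids2 T T₁ v u := by
            rw [g3]; exact List.getLast_mem hk2
          exact (mem_kids2.1 hmem2).2.2.2 hklastv
        have huniv : T₁.desc u = Set.univ := by
          have e1 : listSet hcyc = T₁.desc T₁.root := by
            rw [hcyc_def]; exact (dfs_spec hvu hvchild hleaf T₁.root).1
          have e2 : listSet hcyc = T₁.desc u := by
            rw [hcyc_eq]; exact (dfs_spec hvu hvchild hleaf u).1
          rw [← e2, e1]
          exact T₁.desc_root_eq_univ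
        have hsubU : Set.univ \ T.desc v ⊆ {u} := by
          rintro y ⟨-, hyA⟩
          by_contra hyu
          rw [Set.mem_singleton_iff] at hyu
          have hydesc : y ∈ T₁.desc u := by rw [huniv]; trivial
          rw [T₁.desc_decomp u] at hydesc
          rcases hydesc with hy | hy
          · exact hyu (Set.mem_singleton_iff.1 hy)
          · simp only [Set.mem_iUnion, exists_prop] at hy
            obtain ⟨c', hcch', hyc⟩ := hy
            by_cases hcv' : c' = v
            · rw [hcv', desc_v_singleton hleaf] at hyc
              exact hyA (by rw [Set.mem_singleton_iff.1 hyc]; exact T.desc_self v)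
            · have hckid : c' ∈ kidsF T T₁ v u := mem_kidsF.2 ⟨hcch'.1, hcch'.2, hcv'⟩
              have hckid1 : c' ∈ kids1 T T₁ v u := by
                have e6 : c' ∈ kids1 T T₁ v u ++ kids2 T T₁ v u := hckid
                rw [hkids2, List.append_nil] at e6
                exact e6
              have hc1' := mem_kids1.1 hckid1
              exact hyA (hbackA c' hc1'.2.2.2 hc1'.2.2.1 hyc)
        have hle1 : (Set.univ \ T.desc v).ncard ≤ 1 := by
          calc (Set.univ \ T.desc v).ncard ≤ ({u} : Set V).ncard :=
                Set.ncard_le_ncard hsubU (Set.toFinite _)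
            _ = 1 := Set.ncard_singleton u
        omega
      · -- b ≠ []
        have e2 : hcyc.getLast? = some (b.getLast hb) := by
          rw [hXb, List.getLast?_append_of_ne_nil _ hb, List.getLast?_eq_getLast hb]
        have hxb : x ∈ b := by
          have e7 : x = b.getLast hb := Option.some.inj (hlast.symm.trans e2)
          rw [e7]; exact List.getLast_mem hb
        have hnd2 : (dfs T T₁ u v u ++ b).Nodup := by rw [← hXb]; exact hnd
        rw [List.nodup_append'] at hnd2
        exact hnd2.2.2 hxu hxb
    · -- pv ≥ 1 : previous element lies in a
      have hpL : pL = pv - 1 := by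
        rw [pL_def, show pv + (N - 1) = (pv - 1) + N from by omega,
          Nat.add_mod_right, Nat.mod_eq_of_lt (by omega)]
      have hxa : x ∈ a := by
        have e1 : hcyc[pL]? = a[pL]? := by
          rw [h2]
          exact List.getElem?_append_left (by omega : pL < a.length)
        rw [e1] at hx
        exact List.mem_iff_getElem?.2 ⟨pL, hx⟩
      have hnd2 : (a ++ (dfs T T₁ u v u ++ b)).Nodup := by
        rw [← List.append_assoc, hab]; exact hnd
      rw [List.nodup_append'] at hnd2
      exact hnd2.2.2 hxa (List.mem_append_left b hxu)
  -- conclude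
  refine ⟨hcyc, hham, hconf1, ?_⟩
  intro hconf
  obtain ⟨i, hi⟩ := hconf v
  set m : ℕ := (T.desc v).ncard with m_def
  have hmN : m < N := by
    have hlt : (T.desc v).ncard < (Set.univ : Set V).ncard :=
      Set.ncard_lt_ncard ⟨Set.subset_univ _, fun hall => huA (hall (Set.mem_univ u))⟩
        (Set.toFinite _)
    rw [Set.ncard_univ, Nat.card_eq_fintype_card] at hlt
    omega
  have hinA : ∀ j, j < m → ∀ x, hcyc[(j + i) % N]? = some x → x ∈ T.desc v := by
    intro j hj x hx
    have h1 : ((hcyc.rotate i).take m)[j]? = some x := by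
      rw [List.getElem?_take_of_lt hj,
        List.getElem?_rotate (by omega : j < hcyc.length), ← N_def]
      exact hx
    have h3 : x ∈ listSet ((hcyc.rotate i).take m) := List.mem_iff_getElem?.2 ⟨j, h1⟩
    rw [hi] at h3
    exact h3
  have hvtake : v ∈ (hcyc.rotate i).take m := by
    have h4 : v ∈ listSet ((hcyc.rotate i).take m) := by
      rw [hi]; exact T.desc_self v
    exact h4
  obtain ⟨t, ht⟩ := List.mem_iff_getElem?.1 hvtake
  have htlt : t < m := by
    by_contra hge
    rw [List.getElem?_take_eq_none (by omega)] at ht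
    simp at ht
  have htv : hcyc[(t + i) % N]? = some v := by
    rw [List.getElem?_take_of_lt htlt,
      List.getElem?_rotate (by omega : t < hcyc.length), ← N_def] at ht
    exact ht
  have hpos : (t + i) % N = pv := by
    apply (List.getElem?_inj (l := hcyc) (i := (t + i) % N) (by rw [← N_def]; exact Nat.mod_lt _ (by omega)) hnd).1
    rw [htv, hv_at]
  have ht1 : m ≤ t + 1 := by
    by_contra hlt
    push_neg at hlt
    have hidx : ((t + 1) + i) % N = pv + 1 := by
      rw [show (t + 1) + i = (t + i) + 1 from by omega, Nat.add_mod, hpos,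
        Nat.mod_eq_of_lt (by omega : (1 : ℕ) < N), Nat.mod_eq_of_lt hpv1]
    exact huA (hinA (t + 1) hlt u (by rw [hidx]; exact hu_at))
  have hprev_idx : ((t - 1) + i) % N = pL := by
    rw [pL_def]
    apply mod_pred_helper (by omega)
    rw [show (t - 1 + i) + 1 = t + i from by omega, hpos,
      Nat.mod_eq_of_lt (by omega : pv < N)]
  obtain ⟨xL, hxL⟩ : ∃ xL, hcyc[pL]? = some xL := by
    have h9 : pL < hcyc.length := by omega
    exact ⟨hcyc[pL], List.getElem?_eq_getElem h9⟩
  have hxLA : xL ∈ T.desc v := hinA (t - 1) (by omega) xL (by rw [hprev_idx]; exact hxL)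
  exact hL_notA xL hxL hxLA

end Main

/-- If `v` has at least one child in `T` and at least two vertices lie outside
`T(v)`, then the degree-increasing operation strictly enlarges the tour
neighbourhood: some Hamiltonian cycle conforms to `T₁` but not to `T`. -/
theorem stmt9 {V X : Type} [Fintype V] [MetricSpace X]
    (hn : 3 ≤ Fintype.card V) (f : V → X) (hf : Function.Injective f)
    (T T₁ : ParentTree V) (u v : V) (hv : v ∈ T.children u)
    (hroot : T₁.root = T.root)
    (hpar : ∀ w : V, (T.parent w = v → T₁.parent w = u) ∧
      (T.parent w ≠ v → T₁.parent w = T.parent w))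
    (hchild : (T.children v).Nonempty)
    (houtside : 2 ≤ (Set.univ \ T.desc v).ncard) :
    ∃ h : List V, IsHamCycle h ∧ CycleConforms T₁ h ∧ ¬ CycleConforms T h := by
  exact stmt9' hn f hf T T₁ u v hv hroot hpar hchild houtside
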